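/- Let r be a regular reward function, p ∈ (0,1), s := 1/(1−p), ω := η_s^{-1}, and c > 0. Then the supremum, over all sequences (u_i)_{i≥1} of nonnegative reals with Σ_{i=1}^∞ u_i ≤ c, of Σ_{i=1}^∞ p(1−p)^{i−1} r(u_i) equals Σ_{i=1}^∞ p(1−p)^{i−1} r(κ̄_s^{(i−1)}(ω(c))), and it is attained by the sequence u_i = κ̄_s^{(i−1)}(ω(c)), which satisfies Σ_{i=1}^∞ u_i = c. -/

import Mathlib

open Set Filter MeasureTheory

/-- A regular reward function `r` with derivative `r'`: `r : [0,∞) → [0,∞)` is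
nondecreasing, Lipschitz, strictly concave, differentiable, with `r 0 = 0`; its
derivative `r'` is continuous, strictly decreasing, positive, and tends to `0` at `+∞`.
For each `s ≥ 1`, `τ s` is the unique point with `r' (τ s) = r' 0 / s`, and
`κ s : [τ s, ∞) → [0, ∞)` is defined by the relation `r' (κ s x) = s * r' x`
(for `s = 1` these reduce to `τ 1 = 0` and `κ 1 = id`); regularity means `κ s` is
convex on `[τ s, ∞)` for all `s > 1`. -/
structure RegularReward where
  r : ℝ → ℝ
  r' : ℝ → ℝ
  r_zero : r 0 = 0
  r_nonneg : ∀ x : ℝ, 0 ≤ x → 0 ≤ r x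
  r_mono : MonotoneOn r (Ici (0 : ℝ))
  r_lip : ∃ K : NNReal, LipschitzOnWith K r (Ici (0 : ℝ))
  r_strictConcave : StrictConcaveOn ℝ (Ici (0 : ℝ)) r
  r_hasDeriv : ∀ x : ℝ, 0 ≤ x → HasDerivWithinAt r (r' x) (Ici (0 : ℝ)) x
  deriv_cont : ContinuousOn r' (Ici (0 : ℝ))
  deriv_strictAnti : StrictAntiOn r' (Ici (0 : ℝ))
  deriv_pos : ∀ x : ℝ, 0 ≤ x → 0 < r' x
  deriv_tendsto_zero : Tendsto r' atTop (nhds 0)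
  τ : ℝ → ℝ
  κ : ℝ → ℝ → ℝ
  τ_nonneg : ∀ s : ℝ, 1 ≤ s → 0 ≤ τ s
  τ_spec : ∀ s : ℝ, 1 ≤ s → r' (τ s) = r' 0 / s
  κ_nonneg : ∀ s : ℝ, 1 ≤ s → ∀ x : ℝ, τ s ≤ x → 0 ≤ κ s x
  κ_spec : ∀ s : ℝ, 1 ≤ s → ∀ x : ℝ, τ s ≤ x → r' (κ s x) = s * r' x
  κ_convex : ∀ s : ℝ, 1 < s → ConvexOn ℝ (Ici (τ s)) (κ s)

namespace RegularReward

/-- The extension `κ̄_s (x) := κ_s (max x τ_s)` of `κ_s` to `[0, ∞)`. -/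
noncomputable def kbar (R : RegularReward) (s : ℝ) (x : ℝ) : ℝ :=
  R.κ s (max x (R.τ s))

/-- `M_s(x) = ⌈ln (r' 0 / r' x) / ln s⌉`. -/
noncomputable def M (R : RegularReward) (s : ℝ) (x : ℝ) : ℕ :=
  ⌈Real.log (R.r' 0 / R.r' x) / Real.log s⌉₊

/-- `M̃_s(x) = ⌊ln (r' 0 / r' x) / ln s⌋ + 1`. -/
noncomputable def Mt (R : RegularReward) (s : ℝ) (x : ℝ) : ℕ :=
  ⌊Real.log (R.r' 0 / R.r' x) / Real.log s⌋₊ + 1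

/-- `η_s(x) := ∑_{i=1}^∞ κ̄_s^{(i-1)}(x)`, a finite sum since `κ̄_s^{(i)}(x) = 0` for
`i ≥ M_s(x)`. -/
noncomputable def η (R : RegularReward) (s : ℝ) (x : ℝ) : ℝ :=
  ∑' i : ℕ, (R.kbar s)^[i] x

end RegularReward

/-- **The Bernoulli allocation problem** (from the proof of Theorem 3). Let `r` be a
regular reward function, `p ∈ (0,1)`, `s = 1/(1-p)`, `ω = η_s⁻¹`, and `c > 0`. Then the
supremum of `∑_{i=1}^∞ p (1-p)^{i-1} r(u_i)` over all sequences `(u_i)` of nonnegative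
reals with `∑_{i=1}^∞ u_i ≤ c` equals `∑_{i=1}^∞ p (1-p)^{i-1} r(κ̄_s^{(i-1)}(ω c))`,
attained by `u_i = κ̄_s^{(i-1)}(ω c)`, which satisfies `∑_{i=1}^∞ u_i = c`. -/
theorem bernoulli_allocation_optimal (R : RegularReward) (p : ℝ) (hp : p ∈ Ioo (0 : ℝ) 1)
    (s : ℝ) (hs : s = 1 / (1 - p)) (c : ℝ) (hc : 0 < c)
    (ω : ℝ → ℝ)
    (hω_nonneg : ∀ x : ℝ, 0 ≤ x → 0 ≤ ω x)
    (hω_rightInv : ∀ x : ℝ, 0 ≤ x → R.η s (ω x) = x)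
    (hω_leftInv : ∀ y : ℝ, 0 ≤ y → ω (R.η s y) = y) :
    IsGreatest
      {v : ℝ | ∃ u : ℕ → ℝ, (∀ i : ℕ, 0 ≤ u i) ∧ Summable u ∧ (∑' i : ℕ, u i) ≤ c ∧
        v = ∑' i : ℕ, p * (1 - p) ^ i * R.r (u i)}
      (∑' i : ℕ, p * (1 - p) ^ i * R.r ((R.kbar s)^[i] (ω c))) ∧
      (∑' i : ℕ, (R.kbar s)^[i] (ω c)) = c := by
  obtain ⟨hp0, hp1⟩ := hp
  have h1p : 0 < 1 - p := by linarith
  have hs1 : 1 < s := by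
    rw [hs, lt_div_iff₀ h1p]; linarith
  have hs1' : (1 : ℝ) ≤ s := hs1.le
  have hs0 : (0 : ℝ) < s := by linarith
  have hsp : (1 - p) * s = 1 := by
    rw [hs]; field_simp
  have hτ0 : 0 ≤ R.τ s := R.τ_nonneg s hs1'
  -- injectivity of r' on Ici 0
  have hinj : Set.InjOn R.r' (Ici (0 : ℝ)) := (R.deriv_strictAnti).injOn
  -- kbar facts
  have kbar_nonneg : ∀ x : ℝ, 0 ≤ R.kbar s x := fun x =>
    R.κ_nonneg s hs1' _ (le_max_right _ _)
  have kbar_zero : ∀ x : ℝ, x ≤ R.τ s → R.kbar s x = 0 := by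
    intro x hx
    have hmax : max x (R.τ s) = R.τ s := max_eq_right hx
    have h1 : R.r' (R.κ s (R.τ s)) = s * R.r' (R.τ s) :=
      R.κ_spec s hs1' _ le_rfl
    have h2 : R.r' (R.τ s) = R.r' 0 / s := R.τ_spec s hs1'
    have h3 : R.r' (R.κ s (R.τ s)) = R.r' 0 := by
      rw [h1, h2]; field_simp
    have h4 : R.κ s (R.τ s) = 0 :=
      hinj (mem_Ici.mpr (R.κ_nonneg s hs1' _ le_rfl)) self_mem_Ici h3
    rw [RegularReward.kbar, hmax, h4]
  have kbar_deriv : ∀ x : ℝ, R.τ s ≤ x → R.r' (R.kbar s x) = s * R.r' x := by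
    intro x hx
    rw [RegularReward.kbar, max_eq_left hx]
    exact R.κ_spec s hs1' x hx
  -- the optimal sequence
  set v : ℕ → ℝ := fun i => (R.kbar s)^[i] (ω c) with hv
  have hvsucc : ∀ i, v (i + 1) = R.kbar s (v i) := by
    intro i; simp [hv, Function.iterate_succ_apply']
  have v_nonneg : ∀ i, 0 ≤ v i := by
    intro i
    cases i with
    | zero => exact hω_nonneg c hc.le
    | succ n => rw [hvsucc]; exact kbar_nonneg _
  -- second conjunct
  have sum_v : (∑' i : ℕ, v i) = c := hω_rightInv c hc.le
  refine ⟨⟨?_, ?_⟩, sum_v⟩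
  · -- membership
    have summable_v : Summable v := by
      by_contra h
      rw [tsum_eq_zero_of_not_summable h] at sum_v
      linarith
    exact ⟨v, v_nonneg, summable_v, sum_v.le, rfl⟩
  · -- upper bound
    have summable_v : Summable v := by
      by_contra h
      rw [tsum_eq_zero_of_not_summable h] at sum_v
      linarith
    -- Lipschitz bound on r
    obtain ⟨K, hK⟩ := R.r_lip
    have r_bound : ∀ x : ℝ, 0 ≤ x → R.r x ≤ K * x := by
      intro x hx
      have := hK.dist_le_mul x (mem_Ici.mpr hx) (0 : ℝ) self_mem_Ici
      rw [R.r_zero, Real.dist_eq, Real.dist_eq, sub_zero, sub_zero,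
        abs_of_nonneg hx] at this
      calc R.r x ≤ |R.r x| := le_abs_self _
        _ ≤ K * x := this
    have weight_pos : ∀ i : ℕ, 0 < p * (1 - p) ^ i := fun i =>
      mul_pos hp0 (pow_pos h1p i)
    have weight_le : ∀ i : ℕ, p * (1 - p) ^ i ≤ 1 := by
      intro i
      have h1 : (1 - p) ^ i ≤ 1 := pow_le_one₀ h1p.le (by linarith)
      nlinarith
    have summable_r : ∀ w : ℕ → ℝ, (∀ i, 0 ≤ w i) → Summable w →
        Summable (fun i => p * (1 - p) ^ i * R.r (w i)) := by
      intro w hw hwsum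
      apply Summable.of_nonneg_of_le
        (fun i => mul_nonneg (weight_pos i).le (R.r_nonneg _ (hw i)))
        (fun i => ?_) (hwsum.mul_left (K : ℝ))
      calc p * (1 - p) ^ i * R.r (w i) ≤ 1 * R.r (w i) :=
            mul_le_mul_of_nonneg_right (weight_le i) (R.r_nonneg _ (hw i))
        _ = R.r (w i) := one_mul _
        _ ≤ K * w i := r_bound _ (hw i)
    -- gradient inequality for concave r
    have hconc : ConcaveOn ℝ (Ici (0 : ℝ)) R.r := R.r_strictConcave.concaveOn
    have grad : ∀ u w : ℝ, 0 ≤ u → 0 ≤ w →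
        R.r u ≤ R.r w + R.r' w * (u - w) := by
      intro u w hu hw
      rcases lt_trichotomy u w with h | h | h
      · have h1 := hconc.le_slope_of_hasDerivWithinAt hu hw h (R.r_hasDeriv w hw)
        rw [slope_def_field] at h1
        have hwu : 0 < w - u := by linarith
        rw [le_div_iff₀ hwu] at h1
        nlinarith
      · simp [h]
      · have h1 := hconc.slope_le_of_hasDerivWithinAt hw hu h (R.r_hasDeriv w hw)
        rw [slope_def_field] at h1
        have huw : 0 < u - w := by linarith
        rw [div_le_iff₀ huw] at h1
        nlinarith
    -- the Lagrange multipliers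
    set lam : ℕ → ℝ := fun i => p * (1 - p) ^ i * R.r' (v i) with hlam
    have lam_pos : ∀ i, 0 < lam i := fun i =>
      mul_pos (weight_pos i) (R.deriv_pos _ (v_nonneg i))
    have key : ∀ i, lam i ≤ lam 0 ∧ (0 < v i → lam i = lam 0) := by
      intro i
      induction i with
      | zero => exact ⟨le_rfl, fun _ => rfl⟩
      | succ n ih =>
        have step_eq : R.τ s ≤ v n → lam (n + 1) = lam n := by
          intro hτn
          have hd : R.r' (v (n + 1)) = s * R.r' (v n) := by
            rw [hvsucc]; exact kbar_deriv _ hτn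
          simp only [hlam, hd]
          linear_combination (p * (1 - p) ^ n * R.r' (v n)) * hsp
        constructor
        · rcases le_or_gt (R.τ s) (v n) with hτn | hτn
          · rw [step_eq hτn]; exact ih.1
          · -- v (n+1) = 0
            have hz : v (n + 1) = 0 := by rw [hvsucc]; exact kbar_zero _ hτn.le
            have hr0 : R.r' 0 = s * R.r' (R.τ s) := by
              rw [R.τ_spec s hs1']; field_simp
            have hlt : R.r' (R.τ s) < R.r' (v n) :=
              R.deriv_strictAnti (v_nonneg n) hτ0 hτn
            have e0 : lam (n + 1) = p * (1 - p) ^ n * R.r' (R.τ s) := by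
              simp only [hlam, hz, hr0]
              linear_combination (p * (1 - p) ^ n * R.r' (R.τ s)) * hsp
            have : lam (n + 1) ≤ lam n := by
              rw [e0]
              exact mul_le_mul_of_nonneg_left hlt.le (weight_pos n).le
            exact this.trans ih.1
        · intro hpos
          have hτn : R.τ s ≤ v n := by
            by_contra h
            push_neg at h
            have : v (n + 1) = 0 := by rw [hvsucc]; exact kbar_zero _ h.le
            linarith
          have hvn : 0 < v n := by
            rcases (v_nonneg n).lt_or_eq with h | h
            · exact h
            · exfalso
              have hτeq : R.τ s = 0 := le_antisymm (by rw [h]; exact hτn) hτ0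
              have : v (n + 1) = 0 := by
                rw [hvsucc]; exact kbar_zero _ (by rw [hτeq, ← h])
              linarith
          rw [step_eq hτn]; exact ih.2 hvn
    -- conclude
    rintro x ⟨u, hu0, husum, husumc, rfl⟩
    set L : ℝ := lam 0 with hL
    have hL_nonneg : 0 ≤ L := (lam_pos 0).le
    have termwise : ∀ i, p * (1 - p) ^ i * R.r (u i) ≤
        p * (1 - p) ^ i * R.r (v i) + L * (u i - v i) := by
      intro i
      have h1 := grad (u i) (v i) (hu0 i) (v_nonneg i)
      have h2 : p * (1 - p) ^ i * R.r (u i) ≤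
          p * (1 - p) ^ i * R.r (v i) + lam i * (u i - v i) := by
        have h4 := mul_le_mul_of_nonneg_left h1 (weight_pos i).le
        simp only [hlam]
        calc p * (1 - p) ^ i * R.r (u i)
            ≤ p * (1 - p) ^ i * (R.r (v i) + R.r' (v i) * (u i - v i)) := h4
          _ = p * (1 - p) ^ i * R.r (v i) +
              p * (1 - p) ^ i * R.r' (v i) * (u i - v i) := by ring
      refine h2.trans (add_le_add_right ?_ _)
      rcases (v_nonneg i).lt_or_eq with h | h
      · rw [(key i).2 h]
      · have h3 : 0 ≤ u i - v i := by rw [← h, sub_zero]; exact hu0 i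
        exact mul_le_mul_of_nonneg_right ((key i).1) h3
    have summable_ru : Summable (fun i => p * (1 - p) ^ i * R.r (u i)) :=
      summable_r u hu0 husum
    have summable_rv : Summable (fun i => p * (1 - p) ^ i * R.r (v i)) :=
      summable_r v v_nonneg summable_v
    have summable_diff : Summable (fun i => L * (u i - v i)) :=
      (husum.sub summable_v).mul_left L
    have hsum_le : (∑' i, p * (1 - p) ^ i * R.r (u i)) ≤
        ∑' i, (p * (1 - p) ^ i * R.r (v i) + L * (u i - v i)) :=
      Summable.tsum_le_tsum termwise summable_ru (summable_rv.add summable_diff)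
    have hsplit : (∑' i, (p * (1 - p) ^ i * R.r (v i) + L * (u i - v i))) =
        (∑' i, p * (1 - p) ^ i * R.r (v i)) + L * ((∑' i, u i) - (∑' i, v i)) := by
      rw [Summable.tsum_add summable_rv summable_diff, tsum_mul_left,
        Summable.tsum_sub husum summable_v]
    have hfinal : L * ((∑' i, u i) - (∑' i, v i)) ≤ 0 := by
      apply mul_nonpos_of_nonneg_of_nonpos hL_nonneg
      rw [sum_v]; linarith
    calc (∑' i, p * (1 - p) ^ i * R.r (u i))
        ≤ (∑' i, p * (1 - p) ^ i * R.r (v i)) + L * ((∑' i, u i) - (∑' i, v i)) := by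
          rw [← hsplit]; exact hsum_le
      _ ≤ ∑' i, p * (1 - p) ^ i * R.r (v i) := by linarith
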